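/- Let J ∈ ℝ^{2N×2N} be an invertible skew-symmetric matrix, let H : ℝ → ℝ^{2N×2N} be such that H(t) is symmetric for every t, and let U ∈ ℝ^{2N×k} satisfy UᵀJU = 0. If X̃ : ℝ → ℝ^{2N×2N} is differentiable and satisfies J·X̃′(t) = (I − UUᵀJ)ᵀ H(t) (I − UUᵀJ)·X̃(t) for all t with X̃(0) = I + UUᵀJ, then X(t) := (I − UUᵀJ)X̃(t) is differentiable and satisfies J·X′(t) = H(t)·X(t) for all t with X(0) = I; consequently X̃(t) = (I + UUᵀJ)X(t) for all t. -/

import Mathlib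

open Matrix

/-- If `X̃` solves the rank-k perturbed Hamiltonian system
`J X̃' = (I - UUᵀJ)ᵀ H (I - UUᵀJ) X̃`, `X̃(0) = I + UUᵀJ`, then `X = (I - UUᵀJ)X̃` solves the
unperturbed system `J X' = H X`, `X(0) = I`, and `X̃(t) = (I + UUᵀJ) X(t)` for all `t`. -/
theorem perturbed_solution_form {N k : ℕ}
    (J : Matrix (Fin (2 * N)) (Fin (2 * N)) ℝ)
    (hJskew : Jᵀ = -J) (hJinv : IsUnit J)
    (H : ℝ → Matrix (Fin (2 * N)) (Fin (2 * N)) ℝ)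
    (hH : ∀ t, (H t)ᵀ = H t)
    (U : Matrix (Fin (2 * N)) (Fin k) ℝ) (hU : Uᵀ * J * U = 0)
    (Xt Xt' : ℝ → Matrix (Fin (2 * N)) (Fin (2 * N)) ℝ)
    (hXt : ∀ t, ∀ i j, HasDerivAt (fun s => Xt s i j) (Xt' t i j) t)
    (hsys : ∀ t, J * Xt' t = (1 - U * Uᵀ * J)ᵀ * H t * (1 - U * Uᵀ * J) * Xt t)
    (hinit : Xt 0 = 1 + U * Uᵀ * J) :
    (∀ t, ∀ i j, HasDerivAt (fun s => ((1 - U * Uᵀ * J) * Xt s : Matrix (Fin (2 * N)) (Fin (2 * N)) ℝ) i j)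
        (((1 - U * Uᵀ * J) * Xt' t : Matrix (Fin (2 * N)) (Fin (2 * N)) ℝ) i j) t) ∧
    (∀ t, J * ((1 - U * Uᵀ * J) * Xt' t) = H t * ((1 - U * Uᵀ * J) * Xt t)) ∧
    ((1 - U * Uᵀ * J) * Xt 0 = 1) ∧
    (∀ t, Xt t = (1 + U * Uᵀ * J) * ((1 - U * Uᵀ * J) * Xt t)) := by
  set P : Matrix (Fin (2 * N)) (Fin (2 * N)) ℝ := U * Uᵀ * J with hP
  have hP2 : P * P = 0 := by
    have h1 : P * P = U * (Uᵀ * J * U) * (Uᵀ * J) := by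
      simp only [hP, Matrix.mul_assoc]
    rw [h1, hU]
    simp
  have hPT : Pᵀ * J = - (J * P) := by
    rw [hP, transpose_mul, transpose_mul, transpose_transpose, hJskew]
    noncomm_ring
  have hkey : (1 + P)ᵀ * J = J * (1 - P) := by
    rw [transpose_add, transpose_one, add_mul, one_mul, hPT]
    noncomm_ring
  have hmul1 : (1 - P) * (1 + P) = 1 := by
    rw [sub_mul, one_mul, mul_add, mul_one, hP2]
    abel
  have hmul2 : (1 + P) * (1 - P) = 1 := by
    rw [add_mul, one_mul, mul_sub, mul_one, hP2]
    abel
  refine ⟨?_, ?_, ?_, ?_⟩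
  · intro t i j
    simp only [Matrix.mul_apply]
    exact HasDerivAt.fun_sum fun l _ => (hXt t l j).const_mul _
  · intro t
    calc J * ((1 - P) * Xt' t) = (1 + P)ᵀ * (J * Xt' t) := by
          rw [← mul_assoc, ← hkey, mul_assoc]
      _ = (1 + P)ᵀ * ((1 - P)ᵀ * H t * (1 - P) * Xt t) := by rw [hsys t]
      _ = ((1 - P) * (1 + P))ᵀ * H t * ((1 - P) * Xt t) := by
          rw [transpose_mul]; noncomm_ring
      _ = H t * ((1 - P) * Xt t) := by
          rw [hmul1, transpose_one, one_mul]
  · rw [hinit]; exact hmul1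
  · intro t
    rw [← mul_assoc, hmul2, one_mul]
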